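/- Sudakov-type lower bound on the Talagrand functional: there is a universal constant M > 0 such that if (T', d) is a finite pseudo-metric space of cardinality m ≥ 2 with d(s,t) ≥ ε for all s ≠ t, then γ₂(T', d) ≥ M·ε·√(log m), where γ₂(T',d) := inf over admissible sequences (𝒜_k) of sup_{t∈T'} ∑_{k≥0} 2^{k/2}·Δ(A_k(t)). -/

import Mathlib

open scoped ENNReal

/-- An admissible sequence of partitions of `T'`, encoded as a sequence of equivalence
relations: `P 0` has a single class, each `P (k+1)` refines `P k`, and `P k` has at most
`2^(2^k)` classes for `k ≥ 1`. -/
def IsAdmissibleSeq {T' : Type*} (P : ℕ → T' → T' → Prop) : Prop :=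
  (∀ k, Equivalence (P k)) ∧
  (∀ t s, P 0 t s) ∧
  (∀ k t s, P (k + 1) t s → P k t s) ∧
  (∀ k, 1 ≤ k → ∃ S : Finset T', S.card ≤ 2 ^ (2 ^ k) ∧ ∀ t, ∃ s ∈ S, P k t s)

/-- The diameter of the cell `A_k(t)` of the partition `P k` containing `t`. -/
noncomputable def cellDiam {T' : Type*} (d : T' → T' → ℝ) (P : ℕ → T' → T' → Prop)
    (k : ℕ) (t : T') : ℝ≥0∞ :=
  ⨆ (s) (u) (_ : P k t s) (_ : P k t u), ENNReal.ofReal (d s u)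

/-- Talagrand's functional `γ₂(T', d)`. -/
noncomputable def gammaTwo {T' : Type*} (d : T' → T' → ℝ) : ℝ≥0∞ :=
  ⨅ (P : ℕ → T' → T' → Prop) (_ : IsAdmissibleSeq P),
    ⨆ t, ∑' k : ℕ, ENNReal.ofReal ((2 : ℝ) ^ ((k : ℝ) / 2)) * cellDiam d P k t

-- auxiliary real inequality
lemma sudakov_real_ineq (k m : ℕ) (ε : ℝ) (hε : 0 ≤ ε) (hm2 : 2 ≤ m)
    (hm : (m : ℝ) ≤ 2 ^ (2 ^ (k + 1))) :
    1 / 2 * ε * Real.sqrt (Real.log m) ≤ 2 ^ ((k : ℝ) / 2) * ε := by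
  have hlog : Real.log m ≤ 4 * 2 ^ k := by
    have h1 : Real.log m ≤ Real.log (2 ^ (2 ^ (k + 1))) := by
      apply Real.log_le_log (by positivity) hm
    have h2 : Real.log ((2:ℝ) ^ (2 ^ (k + 1))) = (2 ^ (k+1) : ℕ) * Real.log 2 := by
      rw [Real.log_pow]
    have h3 : Real.log 2 ≤ 1 := by
      nlinarith [Real.log_two_lt_d9]
    have h4 : ((2 ^ (k+1) : ℕ) : ℝ) ≤ 2 * 2 ^ k := by
      push_cast [pow_succ]
      ring_nf
      norm_num
    have h1m : (1:ℝ) ≤ (m:ℝ) := by exact_mod_cast (by omega : 1 ≤ m)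
    nlinarith [Real.log_nonneg h1m, pow_pos (by norm_num : (0:ℝ) < 2) k]
  have hsq : Real.sqrt (Real.log m) ≤ 2 * 2 ^ ((k : ℝ) / 2) := by
    have : Real.sqrt (Real.log m) ≤ Real.sqrt (4 * 2 ^ k) := Real.sqrt_le_sqrt hlog
    refine this.trans ?_
    rw [Real.sqrt_mul (by norm_num), show Real.sqrt 4 = 2 by
      rw [show (4:ℝ) = 2^2 by norm_num, Real.sqrt_sq (by norm_num)]]
    have : Real.sqrt ((2:ℝ) ^ k) = 2 ^ ((k : ℝ) / 2) := by
      rw [Real.sqrt_eq_rpow, ← Real.rpow_natCast 2 k, ← Real.rpow_mul (by norm_num)]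
      norm_num
      ring_nf
    rw [this]
  have hpos : (0:ℝ) ≤ 2 ^ ((k : ℝ) / 2) := le_of_lt (Real.rpow_pos_of_pos (by norm_num) _)
  nlinarith [Real.sqrt_nonneg (Real.log m)]

/-- Sudakov-type lower bound: there is a universal constant `M > 0` such that for any
finite pseudo-metric space of cardinality `m ≥ 2` whose points are `ε`-separated,
`γ₂(T', d) ≥ M ε √(log m)`. -/
theorem gammaTwo_sudakov_lower_bound :
    ∃ M : ℝ, 0 < M ∧
      ∀ (T' : Type) [Fintype T'] (d : T' → T' → ℝ),
        (∀ t, d t t = 0) → (∀ s t, d s t = d t s) →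
        (∀ s t u, d s u ≤ d s t + d t u) → (∀ s t, 0 ≤ d s t) →
        ∀ ε > (0 : ℝ), (∀ s t, s ≠ t → ε ≤ d s t) →
        2 ≤ Fintype.card T' →
        ENNReal.ofReal (M * ε * Real.sqrt (Real.log (Fintype.card T'))) ≤ gammaTwo d := by
  refine ⟨1/2, by norm_num, ?_⟩
  intro T' _ d hrefl hsymm htri hnonneg ε hε hsep hcard
  set m := Fintype.card T' with hm
  -- choose k and two distinct equivalent points
  have key : ∀ (P : ℕ → T' → T' → Prop), IsAdmissibleSeq P →
      ∃ k : ℕ, ((m : ℝ) ≤ 2 ^ (2 ^ (k + 1))) ∧ ∃ t s : T', t ≠ s ∧ P k t s := by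
    intro P hP
    obtain ⟨heq, h0, hmono, hcardk⟩ := hP
    by_cases hm4 : m ≤ 4
    · refine ⟨0, ?_, ?_⟩
      · norm_num
        exact_mod_cast hm4
      · obtain ⟨t, s, hts⟩ := Fintype.exists_pair_of_one_lt_card (α := T') (by omega)
        exact ⟨t, s, hts, h0 t s⟩
    · push_neg at hm4
      set k := Nat.findGreatest (fun j => 2 ^ (2 ^ j) < m) m with hk
      have hP1 : 2 ^ (2 ^ 1) < m := by norm_num; omega
      have hk1 : 1 ≤ k := Nat.le_findGreatest (by omega) hP1
      have hkspec : 2 ^ (2 ^ k) < m :=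
        Nat.findGreatest_spec (P := fun j => 2 ^ (2 ^ j) < m) (m := 1) (by omega) hP1
      have hklt : k < m := lt_of_lt_of_le (by
        calc k < 2 ^ k := Nat.lt_two_pow_self
        _ ≤ 2 ^ (2 ^ k) := Nat.pow_le_pow_right (by norm_num) (Nat.lt_two_pow_self (n := k)).le) hkspec.le
      have hmax : ¬ (2 ^ (2 ^ (k + 1)) < m) :=
        Nat.findGreatest_is_greatest (P := fun j => 2 ^ (2 ^ j) < m) (n := m) (k := k + 1)
          (lt_add_one k) (by omega)
      refine ⟨k, by exact_mod_cast Nat.le_of_not_lt hmax, ?_⟩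
      obtain ⟨S, hScard, hScover⟩ := hcardk k hk1
      have hchoice : ∀ t : T', ∃ s, s ∈ S ∧ P k t s := fun t => by
        obtain ⟨s, hs, hps⟩ := hScover t; exact ⟨s, hs, hps⟩
      choose f hfS hfP using hchoice
      obtain ⟨t, s, hts, hfeq⟩ := Fintype.exists_ne_map_eq_of_card_lt
        (fun t : T' => (⟨f t, hfS t⟩ : {x // x ∈ S}))
        (by rw [Fintype.card_coe, ← hm]; exact lt_of_le_of_lt hScard hkspec)
      refine ⟨t, s, hts, ?_⟩
      have : f t = f s := congrArg Subtype.val hfeq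
      exact (heq k).trans (hfP t) (this ▸ (heq k).symm (hfP s))
  rw [gammaTwo, le_iInf_iff]
  intro P
  rw [le_iInf_iff]
  intro hP
  obtain ⟨k, hmk, t0, s0, hne, hP0⟩ := key P hP
  have hcell : ENNReal.ofReal ε ≤ cellDiam d P k t0 := by
    refine le_trans ?_ (le_iSup_of_le t0 (le_iSup_of_le s0
      (le_iSup_of_le ((hP.1 k).refl t0) (le_iSup_of_le hP0 le_rfl))))
    exact ENNReal.ofReal_le_ofReal (hsep t0 s0 hne)
  calc ENNReal.ofReal (1 / 2 * ε * Real.sqrt (Real.log m))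
      ≤ ENNReal.ofReal (2 ^ ((k : ℝ) / 2) * ε) :=
        ENNReal.ofReal_le_ofReal (sudakov_real_ineq k m ε hε.le hcard hmk)
    _ = ENNReal.ofReal (2 ^ ((k : ℝ) / 2)) * ENNReal.ofReal ε :=
        ENNReal.ofReal_mul (by positivity)
    _ ≤ ENNReal.ofReal (2 ^ ((k : ℝ) / 2)) * cellDiam d P k t0 :=
        mul_le_mul_right hcell _
    _ ≤ ∑' k' : ℕ, ENNReal.ofReal ((2 : ℝ) ^ ((k' : ℝ) / 2)) * cellDiam d P k' t0 :=
        ENNReal.le_tsum k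
    _ ≤ ⨆ t, ∑' k' : ℕ, ENNReal.ofReal ((2 : ℝ) ^ ((k' : ℝ) / 2)) * cellDiam d P k' t :=
        le_iSup_of_le t0 le_rfl
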